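/- Let A be a positive self-adjoint operator on a separable Hilbert space such that e^{-βA} is trace class for every β > 0, let Z(β) = Tr(e^{-βA}), and let σ_β = e^{-βA}/Z(β). For a state ρ with Tr(A^{1/2}ρA^{1/2}) < ∞, the relative entropy satisfies F(ρ, σ_β) = S(ρ) + β·Tr(A^{1/2}ρA^{1/2}) + log Z(β), where S(ρ) = Tr(ρ log ρ). -/

import Mathlib

set_option maxHeartbeats 1000000


open scoped InnerProductSpace

/-- Relative entropy with respect to a Gibbs state.  The positive self-adjoint `A` is
described by its eigenbasis `b` and eigenvalues `μ_j ≥ 0`, with `Z(β) = ∑ e^{-βμ_j} < ∞`,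
so the Gibbs state `σ_β = e^{-βA}/Z(β)` has eigenvalues `e^{-βμ_j}/Z(β)`.  A state `ρ`
has eigenbasis `c` and eigenvalues `r_i ≥ 0` with `∑ r_i = 1`, diagonal entries
`q_j = ⟨b_j, ρ b_j⟩ = ∑_i r_i |⟨c_i, b_j⟩|²` and finite energy
`Tr(A^{1/2} ρ A^{1/2}) = ∑_j μ_j q_j`.  Then
`F(ρ, σ_β) = Tr(ρ log ρ - ρ log σ_β) = S(ρ) + β Tr(A^{1/2} ρ A^{1/2}) + log Z(β)`. -/
theorem stmt15 {H : Type*} [NormedAddCommGroup H] [InnerProductSpace ℂ H]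
    [CompleteSpace H]
    (b c : HilbertBasis ℕ ℂ H) (μ : ℕ → ℝ) (β : ℝ) (hβ : 0 < β)
    (hμ : ∀ j, 0 ≤ μ j)
    (hZ : Summable fun j => Real.exp (-β * μ j))
    (r : ℕ → ℝ) (hr : ∀ i, 0 ≤ r i) (hrsum : Summable r) (hrtot : ∑' i, r i = 1)
    (hS : Summable fun i => r i * Real.log (r i))
    (hEn : Summable fun j => μ j * ∑' i, r i * ‖⟪c i, b j⟫_ℂ‖ ^ 2)
    (hlogsum : Summable fun j =>
      Real.log (Real.exp (-β * μ j) / ∑' k, Real.exp (-β * μ k)) *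
        ∑' i, r i * ‖⟪c i, b j⟫_ℂ‖ ^ 2) :
    (∑' i, r i * Real.log (r i)) -
        (∑' j, Real.log (Real.exp (-β * μ j) / ∑' k, Real.exp (-β * μ k)) *
          ∑' i, r i * ‖⟪c i, b j⟫_ℂ‖ ^ 2) =
      (∑' i, r i * Real.log (r i)) +
        β * (∑' j, μ j * ∑' i, r i * ‖⟪c i, b j⟫_ℂ‖ ^ 2) +
        Real.log (∑' j, Real.exp (-β * μ j)) := by
  set Z : ℝ := ∑' k, Real.exp (-β * μ k) with hZdef
  have hZpos : 0 < Z :=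
    Summable.tsum_pos hZ (fun j => (Real.exp_pos _).le) 0 (Real.exp_pos _)
  -- Parseval: for each i, the squared overlaps sum to 1
  have parseval : ∀ i, HasSum (fun j => ‖⟪c i, b j⟫_ℂ‖ ^ 2) 1 := by
    intro i
    have h := b.hasSum_inner_mul_inner (c i) (c i)
    have hone : ⟪c i, c i⟫_ℂ = 1 := by
      rw [inner_self_eq_norm_sq_to_K, c.orthonormal.1 i]
      norm_num
    rw [hone] at h
    have h2 : (fun j => ⟪c i, b j⟫_ℂ * ⟪b j, c i⟫_ℂ) =
        fun j => ((‖⟪c i, b j⟫_ℂ‖ ^ 2 : ℝ) : ℂ) := by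
      funext j
      rw [← inner_conj_symm (b j) (c i), Complex.mul_conj]
      norm_cast
      rw [Complex.normSq_eq_norm_sq]
    rw [h2] at h
    have := h.mapL Complex.reCLM
    simpa [← Complex.ofReal_pow] using this
  -- summability of the double array
  have hf : Summable (fun p : ℕ × ℕ => r p.1 * ‖⟪c p.1, b p.2⟫_ℂ‖ ^ 2) := by
    apply (summable_prod_of_nonneg ?_).2
    constructor
    · intro i
      simpa using ((parseval i).summable).mul_left (r i)
    · have : (fun i => ∑' j, r i * ‖⟪c i, b j⟫_ℂ‖ ^ 2) = r := by
        funext i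
        rw [tsum_mul_left, (parseval i).tsum_eq, mul_one]
      rw [this]
      exact hrsum
    · intro p
      exact mul_nonneg (hr _) (sq_nonneg _)
  have hq : Summable (fun j => ∑' i, r i * ‖⟪c i, b j⟫_ℂ‖ ^ 2) := by
    have := hf.prod_symm.prod
    simpa [← Complex.ofReal_pow] using this
  have hqtot : (∑' j, ∑' i, r i * ‖⟪c i, b j⟫_ℂ‖ ^ 2) = 1 := by
    have hswap := Summable.tsum_comm' (f := fun i j => r i * ‖⟪c i, b j⟫_ℂ‖ ^ 2) hf
      (fun i => by simpa using ((parseval i).summable).mul_left (r i))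
      (fun j => by simpa using hf.prod_symm.prod_factor j)
    beta_reduce at hswap
    rw [hswap]
    calc (∑' i, ∑' j, r i * ‖⟪c i, b j⟫_ℂ‖ ^ 2) = ∑' i, r i := by
          congr 1; funext i
          rw [tsum_mul_left, (parseval i).tsum_eq, mul_one]
      _ = 1 := hrtot
  -- rewrite the log
  have hlog : ∀ j, Real.log (Real.exp (-β * μ j) / Z) = -β * μ j - Real.log Z := by
    intro j
    rw [Real.log_div (Real.exp_ne_zero _) hZpos.ne', Real.log_exp]
  have key : (∑' j, Real.log (Real.exp (-β * μ j) / Z) *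
      ∑' i, r i * ‖⟪c i, b j⟫_ℂ‖ ^ 2) =
      -β * (∑' j, μ j * ∑' i, r i * ‖⟪c i, b j⟫_ℂ‖ ^ 2) - Real.log Z := by
    have : (fun j => Real.log (Real.exp (-β * μ j) / Z) *
        ∑' i, r i * ‖⟪c i, b j⟫_ℂ‖ ^ 2) =
        fun j => -β * (μ j * ∑' i, r i * ‖⟪c i, b j⟫_ℂ‖ ^ 2) -
          Real.log Z * ∑' i, r i * ‖⟪c i, b j⟫_ℂ‖ ^ 2 := by
      funext j
      rw [hlog j]
      ring
    rw [this, Summable.tsum_sub (hEn.mul_left _) (hq.mul_left _), tsum_mul_left,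
      tsum_mul_left, hqtot, mul_one]
  rw [key]
  ring
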